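/- arXiv:1803.02516 — 6 statements merged into one kernel-verified Lean document; each statement's English description precedes it below -/
import Mathlib

section
/- Let f : B → A and g : C → A be connected epimorphisms between finite connected reflexive graphs. Let D be the induced subgraph of the product graph B × C on the set {(b,c) : f(b) = g(c)}. Then the projection p_B : D → B is a connected epimorphism. -/
/-- A subset `X` of a graph with edge relation `R` is connected if for all nonempty
`U₁, U₂ ⊆ X` with `X = U₁ ∪ U₂` there is an edge between `U₁` and `U₂`. -/
def FinConn {V : Type*} (R : V → V → Prop) (X : Set V) : Prop :=
  ∀ U₁ U₂ : Set V, U₁ ⊆ X → U₂ ⊆ X → U₁.Nonempty → U₂.Nonempty → X = U₁ ∪ U₂ →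
    ∃ x₁ ∈ U₁, ∃ x₂ ∈ U₂, R x₁ x₂

/-- A graph epimorphism: a homomorphism surjective on vertices and on edges. -/
def IsEpi {V W : Type*} (RB : V → V → Prop) (RA : W → W → Prop) (f : V → W) : Prop :=
  (∀ b b', RB b b' → RA (f b) (f b')) ∧ Function.Surjective f ∧
    (∀ a a', RA a a' → ∃ b b', RB b b' ∧ f b = a ∧ f b' = a')

/-- A connected epimorphism: an epimorphism such that the preimage of every connected
subset is connected. -/
def IsConnEpi {V W : Type*} (RB : V → V → Prop) (RA : W → W → Prop) (f : V → W) : Prop :=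
  IsEpi RB RA f ∧ ∀ X : Set W, FinConn RA X → FinConn RB (f ⁻¹' X)

/-- Paths inside a subset `X`. -/
def PathIn {V : Type*} (R : V → V → Prop) (X : Set V) : V → V → Prop :=
  Relation.ReflTransGen (fun a b => R a b ∧ a ∈ X ∧ b ∈ X)

lemma pathIn_of_finConn {V : Type*} {R : V → V → Prop} {X : Set V}
    (h : FinConn R X) {x y : V} (hx : x ∈ X) (hy : y ∈ X) : PathIn R X x y := by
  by_contra hnot
  obtain ⟨x₁, hx₁, x₂, hx₂, hR⟩ := h {z | z ∈ X ∧ PathIn R X x z}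
      {z | z ∈ X ∧ ¬ PathIn R X x z} (fun z hz => hz.1) (fun z hz => hz.1)
      ⟨x, hx, .refl⟩ ⟨y, hy, hnot⟩
      (by ext z; by_cases hz : PathIn R X x z <;> simp [hz])
  exact hx₂.2 (hx₁.2.tail ⟨hR, hx₁.1, hx₂.1⟩)

lemma finConn_of_pathIn {V : Type*} {R : V → V → Prop} {X : Set V}
    (hrefl : ∀ x ∈ X, R x x)
    (h : ∀ x ∈ X, ∀ y ∈ X, PathIn R X x y) : FinConn R X := by
  rintro U₁ U₂ h₁ h₂ ⟨x₁, hx₁⟩ ⟨x₂, hx₂⟩ hcov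
  have main : ∀ z, PathIn R X x₁ z → (z ∈ U₁ ∨ ∃ a ∈ U₁, ∃ b ∈ U₂, R a b) := by
    intro z hz
    induction hz with
    | refl => exact Or.inl hx₁
    | tail hzw hRw ih =>
      rcases ih with hz | hgoal
      · have hmem := hRw.2.2
        rw [hcov] at hmem
        rcases hmem with hw | hw
        · exact Or.inl hw
        · exact Or.inr ⟨_, hz, _, hw, hRw.1⟩
      · exact Or.inr hgoal
  rcases main x₂ (h x₁ (h₁ hx₁) x₂ (h₂ hx₂)) with hx | hgoal
  · exact ⟨x₂, hx, x₂, hx₂, hrefl x₂ (h₂ hx₂)⟩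
  · exact hgoal

lemma finConn_singleton {V : Type*} {R : V → V → Prop} {a : V} (h : R a a) :
    FinConn R {a} := by
  rintro U₁ U₂ h₁ h₂ ⟨x₁, hx₁⟩ ⟨x₂, hx₂⟩ _
  exact ⟨x₁, hx₁, x₂, hx₂, by
    rw [show x₁ = a from h₁ hx₁, show x₂ = a from h₂ hx₂]; exact h⟩

/-- the projection from the fiber-product graph to `B` is a connected
epimorphism, given connected epimorphisms `f : B → A` and `g : C → A` between finite
connected reflexive graphs. -/
theorem fiberProduct_projection_connEpi
    {B C A : Type*} [Fintype B] [Fintype C] [Fintype A]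
    (RB : B → B → Prop) (RC : C → C → Prop) (RA : A → A → Prop)
    (hreflB : ∀ b, RB b b) (hsymmB : ∀ b b', RB b b' → RB b' b)
    (hreflC : ∀ c, RC c c) (hsymmC : ∀ c c', RC c c' → RC c' c)
    (hreflA : ∀ a, RA a a) (hsymmA : ∀ a a', RA a a' → RA a' a)
    (hconnB : FinConn RB Set.univ) (hconnC : FinConn RC Set.univ)
    (hconnA : FinConn RA Set.univ)
    (f : B → A) (g : C → A)
    (hf : IsConnEpi RB RA f) (hg : IsConnEpi RC RA g) :
    IsConnEpi
      (fun p q : {p : B × C // f p.1 = g p.2} =>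
        RB p.1.1 q.1.1 ∧ RC p.1.2 q.1.2)
      RB (fun p => p.1.1) := by
  set RD : {p : B × C // f p.1 = g p.2} → {p : B × C // f p.1 = g p.2} → Prop :=
    fun p q => RB p.1.1 q.1.1 ∧ RC p.1.2 q.1.2 with hRDdef
  constructor
  · refine ⟨fun p q h => h.1, ?_, ?_⟩
    · intro b
      obtain ⟨c, hc⟩ := hg.1.2.1 (f b)
      exact ⟨⟨(b, c), hc.symm⟩, rfl⟩
    · intro b b' hbb'
      obtain ⟨c, c', hcc', hc, hc'⟩ := hg.1.2.2 _ _ (hf.1.1 b b' hbb')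
      exact ⟨⟨(b, c), hc.symm⟩, ⟨(b', c'), hc'.symm⟩, ⟨hbb', hcc'⟩, rfl, rfl⟩
  · intro X hX
    set Y : Set {p : B × C // f p.1 = g p.2} := (fun p => p.1.1) ⁻¹' X with hYdef
    -- any two points of `Y` in the same fiber over `B` are connected by a path in `Y`
    have fiber : ∀ (b : B), b ∈ X → ∀ (p q : {p : B × C // f p.1 = g p.2}),
        p.1.1 = b → q.1.1 = b → PathIn RD Y p q := by
      intro b hb p q hp hq
      obtain ⟨⟨pb, pc⟩, hpp⟩ := p
      obtain ⟨⟨qb, qc⟩, hqq⟩ := q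
      obtain rfl : pb = b := hp
      obtain rfl : qb = pb := hq
      have hFC : FinConn RC (g ⁻¹' {f qb}) := hg.2 _ (finConn_singleton (hreflA (f qb)))
      have hcp : pc ∈ g ⁻¹' {f qb} := by
        simp only [Set.mem_preimage, Set.mem_singleton_iff, ← hpp]
      have hcq : qc ∈ g ⁻¹' {f qb} := by
        simp only [Set.mem_preimage, Set.mem_singleton_iff, ← hqq]
      have lift : ∀ c', PathIn RC (g ⁻¹' {f qb}) pc c' →
          ∀ h : f qb = g c', PathIn RD Y ⟨(qb, pc), hpp⟩ ⟨(qb, c'), h⟩ := by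
        intro c' hp'
        induction hp' with
        | refl => intro h; exact .refl
        | @tail m c'' hpath hstep ih =>
          intro h
          have hm : f qb = g m := hstep.2.1.symm
          exact (ih hm).tail ⟨⟨hreflB qb, hstep.1⟩, hb, hb⟩
      exact lift qc (pathIn_of_finConn hFC hcp hcq) hqq
    -- transport paths in `X` to paths in `Y`
    have key : ∀ b b', PathIn RB X b b' →
        ∀ p : {p : B × C // f p.1 = g p.2}, p.1.1 = b →
        ∃ q : {p : B × C // f p.1 = g p.2}, q.1.1 = b' ∧ PathIn RD Y p q := by
      intro b b' hpath
      induction hpath with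
      | refl => exact fun p hp => ⟨p, hp, .refl⟩
      | @tail m b'' hpath hedge ih =>
        intro p hp
        obtain ⟨q, hq, hpq⟩ := ih p hp
        obtain ⟨c₀, c', hcc', hc₀, hc'⟩ := hg.1.2.2 _ _ (hf.1.1 _ _ hedge.1)
        have hq0 : PathIn RD Y q ⟨(m, c₀), hc₀.symm⟩ := fiber m hedge.2.1 q _ hq rfl
        exact ⟨⟨(b'', c'), hc'.symm⟩, rfl,
          (hpq.trans hq0).tail ⟨⟨hedge.1, hcc'⟩, hedge.2.1, hedge.2.2⟩⟩
    apply finConn_of_pathIn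
    · exact fun x _ => ⟨hreflB _, hreflC _⟩
    · intro p hp q hq
      obtain ⟨q', hq', hpq'⟩ := key _ _ (pathIn_of_finConn hX hp hq) p rfl
      exact hpq'.trans (fiber _ hq q' q hq' rfl)
end

section
/- The class of finite connected reflexive graphs with connected epimorphisms as morphisms satisfies the projective amalgamation property: for any connected epimorphisms f : B → A and g : C → A between finite connected graphs, there exist a finite connected graph D and connected epimorphisms f' : D → B and g' : D → C such that f ∘ f' = g ∘ g'. -/
open Relation

/-- Auxiliary: the step relation of `R` within a set `X`. -/
def Step {V : Type*} (R : V → V → Prop) (X : Set V) (x y : V) : Prop :=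
  x ∈ X ∧ y ∈ X ∧ R x y

lemma finconn_to_reach {V : Type*} {R : V → V → Prop} {X : Set V} (h : FinConn R X)
    {x y : V} (hx : x ∈ X) (hy : y ∈ X) : ReflTransGen (Step R X) x y := by
  by_contra hreach
  obtain ⟨x₁, hx₁, x₂, hx₂, hR⟩ :=
    h {z | z ∈ X ∧ ReflTransGen (Step R X) x z} {z | z ∈ X ∧ ¬ ReflTransGen (Step R X) x z}
      (fun z hz => hz.1) (fun z hz => hz.1) ⟨x, hx, ReflTransGen.refl⟩ ⟨y, hy, hreach⟩
      (by ext z; by_cases hz : ReflTransGen (Step R X) x z <;> simp [hz])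
  exact hx₂.2 (hx₁.2.tail ⟨hx₁.1, hx₂.1, hR⟩)

lemma cross {V : Type*} {R : V → V → Prop} (hrefl : ∀ v, R v v) {X U₁ U₂ : Set V}
    (hcov : X = U₁ ∪ U₂) {x y : V} (hx : x ∈ U₁)
    (hp : ReflTransGen (Step R X) x y) (hy : y ∈ U₂) :
    ∃ a ∈ U₁, ∃ b ∈ U₂, R a b := by
  induction hp with
  | refl => exact ⟨x, hx, x, hy, hrefl x⟩
  | tail _ hstep ih =>
    rename_i b c _
    have hb : b ∈ U₁ ∪ U₂ := hcov ▸ hstep.1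
    rcases hb with hb | hb
    · exact ⟨b, hb, c, hy, hstep.2.2⟩
    · exact ih hb

lemma reach_to_finconn {V : Type*} {R : V → V → Prop} (hrefl : ∀ v, R v v) {X : Set V}
    (h : ∀ x ∈ X, ∀ y ∈ X, ReflTransGen (Step R X) x y) : FinConn R X := by
  rintro U₁ U₂ h₁ h₂ ⟨x₁, hx₁⟩ ⟨x₂, hx₂⟩ hcov
  exact cross hrefl hcov hx₁ (h x₁ (h₁ hx₁) x₂ (h₂ hx₂)) hx₂

lemma finconn_singleton {V : Type*} {R : V → V → Prop} (hrefl : ∀ v, R v v) (a : V) :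
    FinConn R {a} := by
  rintro U₁ U₂ h₁ h₂ ⟨x₁, hx₁⟩ ⟨x₂, hx₂⟩ _
  have e₁ : x₁ = a := h₁ hx₁
  have e₂ : x₂ = a := h₂ hx₂
  exact ⟨x₁, hx₁, x₂, hx₂, by rw [e₁, e₂]; exact hrefl a⟩

lemma finconn_pair {V : Type*} {R : V → V → Prop} (hrefl : ∀ v, R v v)
    (hsymm : ∀ v w, R v w → R w v) {a a' : V} (h : R a a') :
    FinConn R {a, a'} := by
  rintro U₁ U₂ h₁ h₂ ⟨x₁, hx₁⟩ ⟨x₂, hx₂⟩ _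
  refine ⟨x₁, hx₁, x₂, hx₂, ?_⟩
  rcases h₁ hx₁ with e₁ | e₁ <;> rcases h₂ hx₂ with e₂ | e₂ <;> subst e₁ <;> subst e₂
  · exact hrefl _
  · exact h
  · exact hsymm _ _ h
  · exact hrefl _

lemma finconn_equiv {V W : Type*} {RV : V → V → Prop} {RW : W → W → Prop} (e : V ≃ W)
    (h : ∀ x y, RV x y ↔ RW (e x) (e y)) (X : Set W) (hX : FinConn RW X) :
    FinConn RV (e ⁻¹' X) := by
  intro U₁ U₂ h₁ h₂ n₁ n₂ hcov
  obtain ⟨x₁, hx₁, x₂, hx₂, hR⟩ := hX (e '' U₁) (e '' U₂)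
    (by rw [← Set.image_preimage_eq X e.surjective]; exact Set.image_mono h₁)
    (by rw [← Set.image_preimage_eq X e.surjective]; exact Set.image_mono h₂)
    (n₁.image e) (n₂.image e)
    (by rw [← Set.image_union, ← hcov, Set.image_preimage_eq X e.surjective])
  obtain ⟨u₁, hu₁, rfl⟩ := hx₁
  obtain ⟨u₂, hu₂, rfl⟩ := hx₂
  exact ⟨u₁, hu₁, u₂, hu₂, (h u₁ u₂).2 hR⟩

/-- Key lemma: connectivity for preimages of connected sets under the first projection
of the fiber product of two connected epis. -/
lemma key_pullback {B C A : Type}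
    (RB : B → B → Prop) (RC : C → C → Prop) (RA : A → A → Prop)
    (hreflB : ∀ b, RB b b) (hsymmB : ∀ b b', RB b b' → RB b' b)
    (hreflC : ∀ c, RC c c)
    (hreflA : ∀ a, RA a a) (hsymmA : ∀ a a', RA a a' → RA a' a)
    (f : B → A) (g : C → A)
    (hf : IsConnEpi RB RA f) (hg : IsConnEpi RC RA g)
    (X : Set B) (hX : FinConn RB X) :
    FinConn (fun p q : {p : B × C // f p.1 = g p.2} =>
        RB p.1.1 q.1.1 ∧ RC p.1.2 q.1.2)
      ((fun p : {p : B × C // f p.1 = g p.2} => p.1.1) ⁻¹' X) := by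
  set D := {p : B × C // f p.1 = g p.2} with hD
  set RD : D → D → Prop := fun p q => RB p.1.1 q.1.1 ∧ RC p.1.2 q.1.2 with hRD
  set P : Set D := (fun p : D => p.1.1) ⁻¹' X with hP
  -- within a single fiber
  have fiber : ∀ b, b ∈ X → ∀ (c c' : C) (hc : g c = f b) (hc' : g c' = f b),
      ReflTransGen (Step RD P) ⟨(b, c), hc.symm⟩ ⟨(b, c'), hc'.symm⟩ := by
    intro b hb c c' hc hc'
    have hfib : FinConn RC (g ⁻¹' {f b}) := hg.2 _ (finconn_singleton hreflA (f b))
    have hpath : ReflTransGen (Step RC (g ⁻¹' {f b})) c c' :=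
      finconn_to_reach hfib hc hc'
    have aux : ∀ c₂, ReflTransGen (Step RC (g ⁻¹' {f b})) c c₂ →
        ∀ hc' : g c₂ = f b,
        ReflTransGen (Step RD P) ⟨(b, c), hc.symm⟩ ⟨(b, c₂), hc'.symm⟩ := by
      intro c₂ hp
      induction hp with
      | refl => intro _; exact ReflTransGen.refl
      | tail hpre hstep ih =>
        intro hc'
        have hm : g _ = f b := hstep.1
        exact (ih hm).tail ⟨hb, hb, hreflB b, hstep.2.2⟩
    exact aux c' hpath hc'
  -- across an edge
  have edge : ∀ b b', b ∈ X → b' ∈ X → RB b b' →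
      ∀ (c c' : C) (hc : g c = f b) (hc' : g c' = f b'),
      ReflTransGen (Step RD P) ⟨(b, c), hc.symm⟩ ⟨(b', c'), hc'.symm⟩ := by
    intro b b' hb hb' hbb' c c' hc hc'
    have hRBany : ∀ x x', x ∈ ({b, b'} : Set B) → x' ∈ ({b, b'} : Set B) → RB x x' := by
      rintro x x' (rfl | rfl) (rfl | rfl)
      · exact hreflB _
      · exact hbb'
      · exact hsymmB _ _ hbb'
      · exact hreflB _
    have hXany : ∀ x, x ∈ ({b, b'} : Set B) → x ∈ X := by
      rintro x (rfl | rfl); exacts [hb, hb']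
    have hY : FinConn RC (g ⁻¹' {f b, f b'}) :=
      hg.2 _ (finconn_pair hreflA hsymmA (hf.1.1 _ _ hbb'))
    have hpath : ReflTransGen (Step RC (g ⁻¹' {f b, f b'})) c c' :=
      finconn_to_reach hY (Or.inl hc) (Or.inr hc')
    have aux : ∀ c₂, ReflTransGen (Step RC (g ⁻¹' {f b, f b'})) c c₂ →
        ∀ x₂, ∀ hx₂ : x₂ ∈ ({b, b'} : Set B), ∀ h2 : g c₂ = f x₂,
        ReflTransGen (Step RD P) ⟨(b, c), hc.symm⟩ ⟨(x₂, c₂), h2.symm⟩ := by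
      intro c₂ hp
      induction hp with
      | refl =>
        intro x₂ hx₂ h2
        exact ReflTransGen.single
          ⟨hb, hXany x₂ hx₂, hRBany b x₂ (Or.inl rfl) hx₂, hreflC c⟩
      | tail hpre hstep ih =>
        rename_i m c₂'
        intro x₂ hx₂ h2
        rcases hstep.1 with hm | hm
        · exact (ih b (Or.inl rfl) hm).tail
            ⟨hXany b (Or.inl rfl), hXany x₂ hx₂, hRBany b x₂ (Or.inl rfl) hx₂, hstep.2.2⟩
        · exact (ih b' (Or.inr rfl) hm).tail
            ⟨hXany b' (Or.inr rfl), hXany x₂ hx₂, hRBany b' x₂ (Or.inr rfl) hx₂, hstep.2.2⟩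
    exact aux c' hpath b' (Or.inr rfl) hc'
  -- along a path
  have main : ∀ b b', b ∈ X → b' ∈ X → ReflTransGen (Step RB X) b b' →
      ∀ (c c' : C) (hc : g c = f b) (hc' : g c' = f b'),
      ReflTransGen (Step RD P) ⟨(b, c), hc.symm⟩ ⟨(b', c'), hc'.symm⟩ := by
    intro b b' hb hb' hp
    induction hp with
    | refl => exact fun c c' hc hc' => fiber b hb c c' hc hc'
    | tail hpre hstep ih =>
      rename_i m b₂
      intro c c' hc hc'
      obtain ⟨cm, hcm⟩ := hg.1.2.1 (f m)
      exact (ih hstep.1 c cm hc hcm).trans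
        (edge m b₂ hstep.1 hstep.2.1 hstep.2.2 cm c' hcm hc')
  refine reach_to_finconn (fun d => ⟨hreflB _, hreflC _⟩) ?_
  rintro ⟨⟨b, c⟩, hd⟩ hb ⟨⟨b', c'⟩, hd'⟩ hb'
  exact main b b' hb hb' (finconn_to_reach hX hb hb') c c' hd.symm hd'.symm

/-- projective amalgamation property for the class of finite connected
reflexive graphs with connected epimorphisms. -/
theorem projective_amalgamation
    {B C A : Type} [Fintype B] [Fintype C] [Fintype A]
    (RB : B → B → Prop) (RC : C → C → Prop) (RA : A → A → Prop)
    (hreflB : ∀ b, RB b b) (hsymmB : ∀ b b', RB b b' → RB b' b)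
    (hreflC : ∀ c, RC c c) (hsymmC : ∀ c c', RC c c' → RC c' c)
    (hreflA : ∀ a, RA a a) (hsymmA : ∀ a a', RA a a' → RA a' a)
    (hconnB : FinConn RB Set.univ) (hconnC : FinConn RC Set.univ)
    (hconnA : FinConn RA Set.univ)
    (f : B → A) (g : C → A)
    (hf : IsConnEpi RB RA f) (hg : IsConnEpi RC RA g) :
    ∃ (D : Type) (_ : Fintype D) (RD : D → D → Prop),
      (∀ d, RD d d) ∧ (∀ d d', RD d d' → RD d' d) ∧ FinConn RD Set.univ ∧
      ∃ (f' : D → B) (g' : D → C),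
        IsConnEpi RD RB f' ∧ IsConnEpi RD RC g' ∧ f ∘ f' = g ∘ g' := by
  classical
  set D := {p : B × C // f p.1 = g p.2} with hD
  set RD : D → D → Prop := fun p q => RB p.1.1 q.1.1 ∧ RC p.1.2 q.1.2 with hRD
  set f' : D → B := fun p => p.1.1 with hf'
  set g' : D → C := fun p => p.1.2 with hg'
  -- the swapped pullback, for the `g'` direction
  set D' := {p : C × B // g p.1 = f p.2} with hD'
  set RD' : D' → D' → Prop := fun p q => RC p.1.1 q.1.1 ∧ RB p.1.2 q.1.2 with hRD'
  let e : D ≃ D' :=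
    { toFun := fun d => ⟨(d.1.2, d.1.1), d.2.symm⟩
      invFun := fun d => ⟨(d.1.2, d.1.1), d.2.symm⟩
      left_inv := fun d => rfl
      right_inv := fun d => rfl }
  have he : ∀ x y : D, RD x y ↔ RD' (e x) (e y) := by
    intro x y; constructor
    · rintro ⟨h1, h2⟩; exact ⟨h2, h1⟩
    · rintro ⟨h1, h2⟩; exact ⟨h2, h1⟩
  have hconnf' : ∀ X : Set B, FinConn RB X → FinConn RD (f' ⁻¹' X) := fun X hX =>
    key_pullback RB RC RA hreflB hsymmB hreflC hreflA hsymmA f g hf hg X hX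
  have hconng' : ∀ X : Set C, FinConn RC X → FinConn RD (g' ⁻¹' X) := by
    intro X hX
    have h1 : FinConn RD' ((fun p : D' => p.1.1) ⁻¹' X) :=
      key_pullback RC RB RA hreflC hsymmC hreflB hreflA hsymmA g f hg hf X hX
    have h2 : FinConn RD (e ⁻¹' ((fun p : D' => p.1.1) ⁻¹' X)) :=
      finconn_equiv e he _ h1
    exact h2
  refine ⟨D, inferInstance, RD, fun d => ⟨hreflB _, hreflC _⟩,
    fun d d' h => ⟨hsymmB _ _ h.1, hsymmC _ _ h.2⟩, ?_, f', g',
    ⟨⟨fun d d' h => h.1, ?_, ?_⟩, hconnf'⟩, ⟨⟨fun d d' h => h.2, ?_, ?_⟩, hconng'⟩, ?_⟩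
  · have := hconnf' Set.univ hconnB
    simpa using this
  · -- f' surjective on vertices
    intro b
    obtain ⟨c, hc⟩ := hg.1.2.1 (f b)
    exact ⟨⟨(b, c), hc.symm⟩, rfl⟩
  · -- f' surjective on edges
    intro b b' hbb'
    obtain ⟨c, c', hcc', hc, hc'⟩ := hg.1.2.2 (f b) (f b') (hf.1.1 _ _ hbb')
    exact ⟨⟨(b, c), hc.symm⟩, ⟨(b', c'), hc'.symm⟩, ⟨hbb', hcc'⟩, rfl, rfl⟩
  · -- g' surjective on vertices
    intro c
    obtain ⟨b, hb⟩ := hf.1.2.1 (g c)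
    exact ⟨⟨(b, c), hb⟩, rfl⟩
  · -- g' surjective on edges
    intro c c' hcc'
    obtain ⟨b, b', hbb', hb, hb'⟩ := hf.1.2.2 (g c) (g c') (hg.1.1 _ _ hcc')
    exact ⟨⟨(b, c), hb⟩, ⟨(b', c'), hb'⟩, ⟨hbb', hcc'⟩, rfl, rfl⟩
  · exact funext fun d => d.2
end

section
/- Let K be the inverse limit of an inverse sequence (K_n, f^n_m) of finite connected graphs with connected epimorphisms as bonding maps, with edge relation R^K((x_n),(y_n)) iff R^{K_n}(x_n,y_n) for all n. Then K, as a topological graph, is connected: for all open U₁, U₂ ⊆ K with K = U₁ ∪ U₂ and both nonempty, there exist x₁ ∈ U₁, x₂ ∈ U₂ with R^K(x₁,x₂). -/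
/-- Connectedness of a subset of a topological graph. -/
def TopConn {K : Type*} [TopologicalSpace K] (R : K → K → Prop) (X : Set K) : Prop :=
  ∀ U₁ U₂ : Set K, IsOpen U₁ → IsOpen U₂ → (X ∩ U₁).Nonempty → (X ∩ U₂).Nonempty →
    X ⊆ U₁ ∪ U₂ → ∃ x₁ ∈ X ∩ U₁, ∃ x₂ ∈ X ∩ U₂, R x₁ x₂

/-- The inverse limit of a sequence of (finite, discrete) sets with bonding maps. -/
def InvLim (K : ℕ → Type) (f : ∀ n, K (n+1) → K n) : Type :=
  {x : ∀ n, K n // ∀ n, f n (x (n+1)) = x n}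

/-- The inverse-limit topology, where each `K n` carries the discrete topology. -/
instance InvLim.topologicalSpace (K : ℕ → Type) (f : ∀ n, K (n+1) → K n) :
    TopologicalSpace (InvLim K f) :=
  @instTopologicalSpaceSubtype _ _ (@Pi.topologicalSpace ℕ K (fun _ => ⊥))

/-- The coordinatewise edge relation on the inverse limit. -/
def limR {K : ℕ → Type} (R : ∀ n, K n → K n → Prop) {f : ∀ n, K (n+1) → K n}
    (x y : InvLim K f) : Prop :=
  ∀ n, R n (x.1 n) (y.1 n)


section AuxInvLim
variable {K : ℕ → Type} {f : ∀ n, K (n+1) → K n}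

private def bondLE (f : ∀ n, K (n+1) → K n) {n m : ℕ} (h : n ≤ m) : K m → K n :=
  Nat.leRecOn h (fun {k} g => g ∘ f k) id

private theorem bondLE_self {n : ℕ} (h : n ≤ n) (x : K n) : bondLE f h x = x := by
  have : bondLE f h x
      = Nat.leRecOn (C := fun k => K k → K n) n.le_refl (fun {k} g => g ∘ f k) id x := rfl
  rw [this, Nat.leRecOn_self]
  rfl

private theorem bondLE_succ {n m : ℕ} (h : n ≤ m + 1) (h' : n ≤ m) (x : K (m+1)) :
    bondLE f h x = bondLE f h' (f m x) := by
  have : bondLE f h x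
      = Nat.leRecOn (C := fun k => K k → K n) h (fun {k} g => g ∘ f k) id x := rfl
  rw [this, Nat.leRecOn_succ h']
  rfl

private theorem bondLE_coh (x : InvLim K f) {n m : ℕ} (h : n ≤ m) :
    bondLE f h (x.1 m) = x.1 n := by
  induction h with
  | refl => exact bondLE_self _ _
  | @step m h ih =>
    rw [bondLE_succ _ h, x.2 m]; exact ih

private theorem f_bondLE (f : ∀ n, K (n+1) → K n) {n m : ℕ} (h : n + 1 ≤ m) (h' : n ≤ m)
    (x : K m) : f n (bondLE f h x) = bondLE f h' x := by
  induction h with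
  | refl =>
    rw [bondLE_self, bondLE_succ h' n.le_refl, bondLE_self]
  | @step m h ih =>
    rw [bondLE_succ _ h, bondLE_succ h' (Nat.le_of_succ_le h), ih]

/-- Every point at level `m` lifts to a point of the inverse limit, provided all bonding
maps are surjective. -/
private theorem exists_lift (K : ℕ → Type) (f : ∀ n, K (n+1) → K n)
    (hs : ∀ n, Function.Surjective (f n)) (m : ℕ) (a : K m) :
    ∃ x : InvLim K f, x.1 m = a := by
  classical
  let s : ∀ n, K n → K (n+1) := fun n => Function.surjInv (hs n)
  have hsec : ∀ n (y : K n), f n (s n y) = y := fun n => Function.surjInv_eq (hs n)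
  let u : ∀ k, K (m + k) := fun k => Nat.rec a (fun k uk => s (m+k) uk) k
  have hu : ∀ k, f (m + k) (u (k+1)) = u k := fun k => hsec (m+k) (u k)
  refine ⟨⟨fun n => bondLE f (Nat.le_add_left n m) (u n), ?_⟩, ?_⟩
  · intro n
    show f n (bondLE f (Nat.le_add_left (n+1) m) (u (n+1))) = bondLE f (Nat.le_add_left n m) (u n)
    rw [f_bondLE f (Nat.le_add_left (n+1) m) (le_trans (Nat.le_succ n) (Nat.le_add_left (n+1) m)),
      bondLE_succ _ (Nat.le_add_left n m), hu n]
  · show bondLE f (Nat.le_add_left m m) (u m) = a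
    have : ∀ k (h : m ≤ m + k), bondLE f h (u k) = a := by
      intro k
      induction k with
      | zero => intro h; exact bondLE_self h a
      | succ k ih =>
        intro h
        rw [bondLE_succ _ (Nat.le_add_right m k), hu k]
        exact ih _
    exact this m _

private theorem invLim_compactSpace (K : ℕ → Type) [∀ n, Fintype (K n)]
    (f : ∀ n, K (n+1) → K n) : CompactSpace (InvLim K f) := by
  letI : ∀ n, TopologicalSpace (K n) := fun _ => ⊥
  haveI : ∀ n, DiscreteTopology (K n) := fun n => ⟨rfl⟩
  have hcl : IsClosed {x : ∀ n, K n | ∀ n, f n (x (n+1)) = x n} := by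
    have : {x : ∀ n, K n | ∀ n, f n (x (n+1)) = x n} = ⋂ n, {x | f n (x (n+1)) = x n} := by
      ext x; simp [Set.mem_iInter]
    rw [this]
    exact isClosed_iInter fun n =>
      isClosed_eq (Continuous.comp continuous_of_discreteTopology (continuous_apply (n+1)))
        (continuous_apply n)
  exact isCompact_iff_compactSpace.mp hcl.isCompact

private theorem isOpen_cyl (K : ℕ → Type) (f : ∀ n, K (n+1) → K n) (n : ℕ) (c : K n) :
    IsOpen {y : InvLim K f | y.1 n = c} := by
  letI : ∀ n, TopologicalSpace (K n) := fun _ => ⊥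
  haveI : ∀ n, DiscreteTopology (K n) := fun n => ⟨rfl⟩
  have : {y : InvLim K f | y.1 n = c}
      = (Subtype.val) ⁻¹' ((fun z : ∀ n, K n => z n) ⁻¹' {c}) := rfl
  rw [this]
  exact ((continuous_apply n).comp continuous_subtype_val).isOpen_preimage _ (isOpen_discrete _)

/-- An open compact set in the inverse limit is determined by some finite level. -/
private theorem exists_stable (K : ℕ → Type) (f : ∀ n, K (n+1) → K n)
    (U : Set (InvLim K f)) (hU : IsOpen U) (hUc : IsCompact U) :
    ∃ N, ∀ x ∈ U, ∀ y : InvLim K f, y.1 N = x.1 N → y ∈ U := by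
  classical
  letI : ∀ n, TopologicalSpace (K n) := fun _ => ⊥
  haveI : ∀ n, DiscreteTopology (K n) := fun n => ⟨rfl⟩
  have key : ∀ x ∈ U, ∃ n, ∀ y : InvLim K f, y.1 n = x.1 n → y ∈ U := by
    intro x hx
    obtain ⟨V, hV, hVU⟩ := isOpen_induced_iff.mp hU
    have hxV : x.1 ∈ V := by rw [← hVU] at hx; exact hx
    obtain ⟨I, u, h1, h2⟩ := isOpen_pi_iff.mp hV x.1 hxV
    refine ⟨I.sup id, fun y hy => ?_⟩
    rw [← hVU]
    refine h2 ?_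
    intro i hi
    have hiN : i ≤ I.sup id := Finset.le_sup (f := id) hi
    have : y.1 i = x.1 i := by
      rw [← bondLE_coh y hiN, hy, bondLE_coh x hiN]
    rw [this]
    exact (h1 i hi).2
  choose n hn using fun x : U => key x.1 x.2
  obtain ⟨t, ht⟩ := hUc.elim_finite_subcover
    (fun x : U => {y : InvLim K f | y.1 (n x) = x.1.1 (n x)})
    (fun x => isOpen_cyl K f _ _)
    (fun y hy => Set.mem_iUnion.mpr ⟨⟨y, hy⟩, rfl⟩)
  refine ⟨t.sup n, fun x hx y hxy => ?_⟩
  obtain ⟨c, hc, hxc⟩ := Set.mem_iUnion₂.mp (ht hx)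
  have hcN : n c ≤ t.sup n := Finset.le_sup hc
  refine hn c y ?_
  have : y.1 (n c) = x.1 (n c) := by
    rw [← bondLE_coh y hcN, hxy, bondLE_coh x hcN]
  rw [this]
  exact hxc

end AuxInvLim

/-- the inverse limit of finite connected graphs with connected epimorphic
bonding maps is a connected topological graph. -/
theorem invLim_connected
    (K : ℕ → Type) [∀ n, Fintype (K n)]
    (R : ∀ n, K n → K n → Prop)
    (hrefl : ∀ n (x : K n), R n x x) (hsymm : ∀ n (x y : K n), R n x y → R n y x)
    (hconn : ∀ n, FinConn (R n) Set.univ)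
    (f : ∀ n, K (n+1) → K n) (hf : ∀ n, IsConnEpi (R (n+1)) (R n) (f n)) :
    ∀ U₁ U₂ : Set (InvLim K f), IsOpen U₁ → IsOpen U₂ →
      U₁.Nonempty → U₂.Nonempty → (Set.univ : Set (InvLim K f)) = U₁ ∪ U₂ →
      ∃ x₁ ∈ U₁, ∃ x₂ ∈ U₂, limR R x₁ x₂ := by
  classical
  intro U₁ U₂ hO₁ hO₂ hne₁ hne₂ hcov
  by_cases hint : (U₁ ∩ U₂).Nonempty
  · obtain ⟨z, hz1, hz2⟩ := hint
    exact ⟨z, hz1, z, hz2, fun n => hrefl n _⟩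
  have hdisj : ∀ z, z ∈ U₁ → z ∈ U₂ → False := fun z h1 h2 => hint ⟨z, h1, h2⟩
  have hmem : ∀ z : InvLim K f, z ∈ U₁ ∪ U₂ := fun z => hcov ▸ Set.mem_univ z
  have hcompl1 : U₁ = U₂ᶜ := by
    ext z
    exact ⟨fun h hz => hdisj z h hz, fun h => (hmem z).resolve_right h⟩
  have hcompl2 : U₂ = U₁ᶜ := by
    ext z
    exact ⟨fun h hz => hdisj z hz h, fun h => (hmem z).resolve_left h⟩
  haveI := invLim_compactSpace K f
  have hc1 : IsCompact U₁ := (hcompl1 ▸ hO₂.isClosed_compl).isCompact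
  have hc2 : IsCompact U₂ := (hcompl2 ▸ hO₁.isClosed_compl).isCompact
  obtain ⟨N₁, hs1⟩ := exists_stable K f U₁ hO₁ hc1
  obtain ⟨N₂, hs2⟩ := exists_stable K f U₂ hO₂ hc2
  set N := max N₁ N₂ with hN
  have hst1 : ∀ x ∈ U₁, ∀ y : InvLim K f, y.1 N = x.1 N → y ∈ U₁ := by
    intro x hx y h
    exact hs1 x hx y (by rw [← bondLE_coh y (le_max_left N₁ N₂), h,
      bondLE_coh x (le_max_left N₁ N₂)])
  have hst2 : ∀ x ∈ U₂, ∀ y : InvLim K f, y.1 N = x.1 N → y ∈ U₂ := by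
    intro x hx y h
    exact hs2 x hx y (by rw [← bondLE_coh y (le_max_right N₁ N₂), h,
      bondLE_coh x (le_max_right N₁ N₂)])
  have hsurj : ∀ n, Function.Surjective (f n) := fun n => (hf n).1.2.1
  obtain ⟨x₀, hx₀⟩ := hne₁
  obtain ⟨y₀, hy₀⟩ := hne₂
  set A := {a : K N | ∃ x ∈ U₁, x.1 N = a} with hA
  set B := {b : K N | ∃ x ∈ U₂, x.1 N = b} with hB
  have hAne : A.Nonempty := ⟨x₀.1 N, x₀, hx₀, rfl⟩
  have hBne : B.Nonempty := ⟨y₀.1 N, y₀, hy₀, rfl⟩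
  have hcovAB : (Set.univ : Set (K N)) = A ∪ B := by
    ext a
    simp only [Set.mem_univ, true_iff]
    obtain ⟨x, hxa⟩ := exists_lift K f hsurj N a
    rcases hmem x with h | h
    · exact Or.inl ⟨x, h, hxa⟩
    · exact Or.inr ⟨x, h, hxa⟩
  obtain ⟨a, ha, b, hb, hab⟩ :=
    hconn N A B (Set.subset_univ _) (Set.subset_univ _) hAne hBne hcovAB
  -- the inverse system of edges
  let K' : ℕ → Type := fun n => {p : K n × K n // R n p.1 p.2}
  let f' : ∀ n, K' (n+1) → K' n := fun n p => ⟨(f n p.1.1, f n p.1.2), (hf n).1.1 _ _ p.2⟩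
  have hsurj' : ∀ n, Function.Surjective (f' n) := by
    rintro n ⟨⟨a', b'⟩, hab'⟩
    obtain ⟨b₁, b₂, hR, h1, h2⟩ := (hf n).1.2.2 a' b' hab'
    refine ⟨⟨(b₁, b₂), hR⟩, ?_⟩
    apply Subtype.ext
    simp [f', h1, h2]
  obtain ⟨e, he⟩ := exists_lift K' f' hsurj' N ⟨(a, b), hab⟩
  let x : InvLim K f := ⟨fun n => (e.1 n).1.1, fun n => congrArg (fun p : K' n => p.1.1) (e.2 n)⟩
  let y : InvLim K f := ⟨fun n => (e.1 n).1.2, fun n => congrArg (fun p : K' n => p.1.2) (e.2 n)⟩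
  have hxN : x.1 N = a := congrArg (fun p : K' N => p.1.1) he
  have hyN : y.1 N = b := congrArg (fun p : K' N => p.1.2) he
  obtain ⟨xa, hxa, hxaN⟩ := ha
  obtain ⟨yb, hyb, hybN⟩ := hb
  exact ⟨x, hst1 xa hxa x (hxN.trans hxaN.symm), y, hst2 yb hyb y (hyN.trans hybN.symm),
    fun n => (e.1 n).2⟩
end

section
/- Let K be a topological graph whose edge relation R^K is an equivalence relation (a prespace), and suppose K is the inverse limit of finite connected graphs with connected epimorphic bonding maps. If Z ⊆ V ⊆ K with Z saturated under R^K (i.e., Z = [Z]) and V open, then there is an open set W with Z ⊆ W and [W] ⊆ V; moreover if Z is closed, W can be chosen clopen. -/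
/-- The saturation of a set under the relation. -/
def sat {K : ℕ → Type} (R : ∀ n, K n → K n → Prop) {f : ∀ n, K (n+1) → K n}
    (S : Set (InvLim K f)) : Set (InvLim K f) :=
  {y | ∃ x ∈ S, limR R x y}


open Filter Topology

section Aux

variable {K : ℕ → Type} {R : ∀ n, K n → K n → Prop} {f : ∀ n, K (n+1) → K n}

/-- The relation at a higher level implies it at lower levels. -/
lemma step_down (hf : ∀ n, IsConnEpi (R (n+1)) (R n) (f n)) (x y : InvLim K f) :
    ∀ d k, R (k+d) (x.1 (k+d)) (y.1 (k+d)) → R k (x.1 k) (y.1 k) := by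
  intro d
  induction d with
  | zero => intro k h; exact h
  | succ d ih =>
    intro k h
    apply ih k
    have h' : R (k+d) (f (k+d) (x.1 ((k+d)+1))) (f (k+d) (y.1 ((k+d)+1))) :=
      (hf (k+d)).1.1 _ _ h
    rwa [x.2 (k+d), y.2 (k+d)] at h'

lemma step_down' (hf : ∀ n, IsConnEpi (R (n+1)) (R n) (f n)) (x y : InvLim K f)
    {k m : ℕ} (hkm : k ≤ m) (h : R m (x.1 m) (y.1 m)) : R k (x.1 k) (y.1 k) := by
  obtain ⟨d, rfl⟩ := Nat.exists_eq_add_of_le hkm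
  exact step_down hf x y d k h

lemma isClopen_coord (n : ℕ) (S : Set (K n)) :
    IsClopen {x : InvLim K f | x.1 n ∈ S} := by
  letI : ∀ i, TopologicalSpace (K i) := fun _ => ⊥
  haveI : ∀ i, DiscreteTopology (K i) := fun _ => ⟨rfl⟩
  have hc : Continuous (fun x : InvLim K f => x.1 n) :=
    (continuous_apply n).comp continuous_subtype_val
  exact (isClopen_discrete S).preimage hc

lemma invLim_compact [∀ n, Fintype (K n)] : CompactSpace (InvLim K f) := by
  letI : ∀ i, TopologicalSpace (K i) := fun _ => ⊥
  haveI : ∀ i, DiscreteTopology (K i) := fun _ => ⟨rfl⟩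
  have hcl : IsClosed {x : ∀ n, K n | ∀ n, f n (x (n+1)) = x n} := by
    rw [Set.setOf_forall]
    exact isClosed_iInter fun n =>
      isClosed_eq (continuous_of_discreteTopology.comp (continuous_apply (n+1)))
        (continuous_apply n)
  exact isCompact_iff_compactSpace.mp hcl.isCompact

/-- Finite-level transitivity extracted from transitivity of `limR` by compactness. -/
lemma lemmaT [∀ n, Fintype (K n)]
    (hf : ∀ n, IsConnEpi (R (n+1)) (R n) (f n))
    (htrans : Transitive (limR R (f := f))) (n : ℕ) :
    ∃ N, n ≤ N ∧ ∀ x y w : InvLim K f,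
      R N (x.1 N) (y.1 N) → R N (y.1 N) (w.1 N) → R n (x.1 n) (w.1 n) := by
  by_contra hcon
  push_neg at hcon
  choose X Y Wf h1 h2 h3 using fun m : ℕ => hcon (n + m) (Nat.le_add_right n m)
  haveI : CompactSpace (InvLim K f) := invLim_compact
  set g : ℕ → InvLim K f × InvLim K f × InvLim K f := fun m => (X m, Y m, Wf m) with hg
  obtain ⟨p, hp⟩ := exists_clusterPt_of_compactSpace (Filter.map g atTop)
  have hp' : MapClusterPt p atTop g := hp
  have key : ∀ k, ∃ m, k ≤ m ∧ (X m).1 k = p.1.1 k ∧ (Y m).1 k = p.2.1.1 k ∧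
      (Wf m).1 k = p.2.2.1 k := by
    intro k
    set U : Set (InvLim K f × InvLim K f × InvLim K f) :=
      {q | q.1.1 k = p.1.1 k ∧ q.2.1.1 k = p.2.1.1 k ∧ q.2.2.1 k = p.2.2.1 k} with hU
    have hUopen : IsOpen U := by
      have o1 : IsOpen {q : InvLim K f × InvLim K f × InvLim K f | q.1.1 k = p.1.1 k} :=
        (isClopen_coord (f := f) k {p.1.1 k}).2.preimage continuous_fst
      have o2 : IsOpen {q : InvLim K f × InvLim K f × InvLim K f | q.2.1.1 k = p.2.1.1 k} :=
        (isClopen_coord (f := f) k {p.2.1.1 k}).2.preimage (continuous_fst.comp continuous_snd)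
      have o3 : IsOpen {q : InvLim K f × InvLim K f × InvLim K f | q.2.2.1 k = p.2.2.1 k} :=
        (isClopen_coord (f := f) k {p.2.2.1 k}).2.preimage (continuous_snd.comp continuous_snd)
      have : U = {q : InvLim K f × InvLim K f × InvLim K f | q.1.1 k = p.1.1 k} ∩
          ({q | q.2.1.1 k = p.2.1.1 k} ∩ {q | q.2.2.1 k = p.2.2.1 k}) := by
        ext q; simp [hU, Set.mem_setOf_eq, and_assoc]
      rw [this]; exact o1.inter (o2.inter o3)
    have hUmem : U ∈ 𝓝 p := hUopen.mem_nhds ⟨rfl, rfl, rfl⟩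
    have hfreq : ∃ᶠ m in atTop, g m ∈ U := mapClusterPt_iff_frequently.mp hp' U hUmem
    obtain ⟨m, hmU, hmk⟩ := (hfreq.and_eventually (eventually_ge_atTop k)).exists
    exact ⟨m, hmk, hmU.1, hmU.2.1, hmU.2.2⟩
  have hxy : limR R p.1 p.2.1 := by
    intro k
    obtain ⟨m, hm, e1, e2, _⟩ := key k
    have := step_down' hf (X m) (Y m) (le_trans hm (Nat.le_add_left m n)) (h1 m)
    rwa [e1, e2] at this
  have hyw : limR R p.2.1 p.2.2 := by
    intro k
    obtain ⟨m, hm, _, e2, e3⟩ := key k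
    have := step_down' hf (Y m) (Wf m) (le_trans hm (Nat.le_add_left m n)) (h2 m)
    rwa [e2, e3] at this
  have hxw : limR R p.1 p.2.2 := htrans hxy hyw
  obtain ⟨m, _, e1, _, e3⟩ := key n
  exact h3 m (by rw [e1, e3]; exact hxw n)

/-- Per-point level selection: if the class of `z` is inside open `V`, some finite-level
approximation of the class is already inside `V`. -/
lemma point_level [∀ n, Fintype (K n)]
    (hf : ∀ n, IsConnEpi (R (n+1)) (R n) (f n))
    (z : InvLim K f) {V : Set (InvLim K f)} (hV : IsOpen V)
    (hcls : {y : InvLim K f | limR R z y} ⊆ V) :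
    ∃ n, {y : InvLim K f | R n (z.1 n) (y.1 n)} ⊆ V := by
  by_contra h
  push_neg at h
  haveI : CompactSpace (InvLim K f) := invLim_compact
  set s : ℕ → Set (InvLim K f) := fun n => {y | R n (z.1 n) (y.1 n)} ∩ Vᶜ with hs
  have hne : ∀ n, (s n).Nonempty := by
    intro n
    obtain ⟨y, hy1, hy2⟩ := Set.not_subset.mp (h n)
    exact ⟨y, hy1, hy2⟩
  have hdec : ∀ n, s (n+1) ⊆ s n := by
    rintro n y ⟨hy1, hy2⟩
    exact ⟨step_down' hf z y (Nat.le_succ n) hy1, hy2⟩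
  have hcl : ∀ n, IsClosed (s n) :=
    fun n => ((isClopen_coord (f := f) n {b | R n (z.1 n) b}).1).inter hV.isClosed_compl
  obtain ⟨y, hy⟩ := IsCompact.nonempty_iInter_of_sequence_nonempty_isCompact_isClosed s
    hdec hne ((hcl 0).isCompact) hcl
  have hyV : y ∈ V := hcls fun n => (Set.mem_iInter.mp hy n).1
  exact (Set.mem_iInter.mp hy 0).2 hyV

end Aux

/-- in a prespace arising as an inverse limit of finite connected graphs
with connected epimorphic bonding maps, a saturated set `Z` contained in an open `V`
can be separated: there is open `W` with `Z ⊆ W` and `[W] ⊆ V`; if `Z` is closed,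
`W` can be chosen clopen. -/
theorem prespace_saturation_separation
    (K : ℕ → Type) [∀ n, Fintype (K n)]
    (R : ∀ n, K n → K n → Prop)
    (hrefl : ∀ n (x : K n), R n x x) (hsymm : ∀ n (x y : K n), R n x y → R n y x)
    (hconn : ∀ n, FinConn (R n) Set.univ)
    (f : ∀ n, K (n+1) → K n) (hf : ∀ n, IsConnEpi (R (n+1)) (R n) (f n))
    (htrans : Transitive (limR R (f := f)))
    (Z V : Set (InvLim K f)) (hZV : Z ⊆ V) (hV : IsOpen V)
    (hZsat : sat R Z = Z) :
    (∃ W : Set (InvLim K f), IsOpen W ∧ Z ⊆ W ∧ sat R W ⊆ V) ∧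
    (IsClosed Z → ∃ W : Set (InvLim K f), IsClopen W ∧ Z ⊆ W ∧ sat R W ⊆ V) := by
  classical
  haveI : CompactSpace (InvLim K f) := invLim_compact
  -- each point of `Z` has its class inside `V`
  have hclsV : ∀ z ∈ Z, {y : InvLim K f | limR R z y} ⊆ V := by
    intro z hz y hy
    exact hZV (hZsat ▸ ⟨z, hz, hy⟩)
  constructor
  · -- open case: union of pointwise clopen sets
    have hex : ∀ z : InvLim K f, z ∈ Z → ∃ N : ℕ,
        sat R {y : InvLim K f | R N (z.1 N) (y.1 N)} ⊆ V := by
      intro z hz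
      obtain ⟨n, hn⟩ := point_level hf z hV (hclsV z hz)
      obtain ⟨N, hnN, hN⟩ := lemmaT hf htrans n
      refine ⟨N, ?_⟩
      rintro w ⟨y, hy, hyw⟩
      exact hn (hN z y w hy (hyw N))
    choose! N hN using hex
    refine ⟨⋃ z ∈ Z, {y : InvLim K f | R (N z) (z.1 (N z)) (y.1 (N z))}, ?_, ?_, ?_⟩
    · exact isOpen_biUnion fun z _ =>
        (isClopen_coord (f := f) (N z) {b | R (N z) (z.1 (N z)) b}).2
    · intro z hz
      exact Set.mem_biUnion hz (hrefl _ _)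
    · rintro w ⟨y, hy, hyw⟩
      obtain ⟨z, hz, hyz⟩ := Set.mem_iUnion₂.mp hy
      exact hN z hz ⟨y, hyz, hyw⟩
  · -- clopen case
    intro hZcl
    -- choose a per-point level, then a uniform level by compactness of Z
    have hex : ∀ z : InvLim K f, z ∈ Z → ∃ n : ℕ,
        {y : InvLim K f | R n (z.1 n) (y.1 n)} ⊆ V :=
      fun z hz => point_level hf z hV (hclsV z hz)
    choose! nz hnz using hex
    have hZcomp : IsCompact Z := hZcl.isCompact
    -- cover Z by cylinders on which the chosen level works
    have hcover : Z ⊆ ⋃ z : Z, {x : InvLim K f | x.1 (nz z.1) = (z.1).1 (nz z.1)} := by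
      intro x hx
      exact Set.mem_iUnion.mpr ⟨⟨x, hx⟩, rfl⟩
    obtain ⟨t, ht⟩ := hZcomp.elim_finite_subcover
      (fun z : Z => {x : InvLim K f | x.1 (nz z.1) = (z.1).1 (nz z.1)})
      (fun z => (isClopen_coord (f := f) (nz z.1) {(z.1).1 (nz z.1)}).2) hcover
    set n₀ : ℕ := t.sup fun z => nz z.1 with hn₀
    -- the uniform level works for every point of Z
    have huniform : ∀ z ∈ Z, {y : InvLim K f | R n₀ (z.1 n₀) (y.1 n₀)} ⊆ V := by
      intro z hz y hy
      obtain ⟨i, hit⟩ := Set.mem_iUnion₂.mp (ht hz)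
      obtain ⟨hi, hzi⟩ := hit
      -- z agrees with i at level nz i.1
      have hle : nz i.1 ≤ n₀ := Finset.le_sup (f := fun z : Z => nz z.1) hi
      have hy' : R (nz i.1) (z.1 (nz i.1)) (y.1 (nz i.1)) := step_down' hf z y hle hy
      have : R (nz i.1) ((i.1).1 (nz i.1)) (y.1 (nz i.1)) := by rwa [hzi] at hy'
      exact hnz i.1 i.2 this
    obtain ⟨Nn, _, hNn⟩ := lemmaT hf htrans n₀
    refine ⟨{y : InvLim K f | ∃ z ∈ Z, R Nn (z.1 Nn) (y.1 Nn)}, ?_, ?_, ?_⟩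
    · have : {y : InvLim K f | ∃ z ∈ Z, R Nn (z.1 Nn) (y.1 Nn)} =
          {y : InvLim K f | y.1 Nn ∈ {b | ∃ z ∈ Z, R Nn (z.1 Nn) b}} := rfl
      rw [this]
      exact isClopen_coord (f := f) Nn _
    · exact fun z hz => ⟨z, hz, hrefl _ _⟩
    · rintro w ⟨y, ⟨z, hz, hzy⟩, hyw⟩
      exact huniform z hz (hNn z y w hzy (hyw Nn))
end

section
/- Let α : X → A be a graph homomorphism from a finite reflexive graph X to a finite connected reflexive graph A, with disjoint domains. Define the mapping cylinder C_α on dom(A) ∪ dom(X) by: edges within A and within X are as given, and x ∈ X is adjacent to a ∈ A iff a = α(x') for some x' with R^X(x,x'). Then C_α is a finite connected graph, and the canonical retraction r_α : C_α → A (r_α(x) = α(x) for x ∈ X, r_α(a) = a for a ∈ A) is a connected epimorphism. -/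
/-- The edge relation of the mapping cylinder of a graph homomorphism `α : X → A`,
on the disjoint union `A ⊕ X`: edges within `A` and within `X` are as given, and
`x ∈ X` is adjacent to `a ∈ A` iff `a = α x'` for some `x'` adjacent to `x` in `X`. -/
def cylR {A X : Type*} (RA : A → A → Prop) (RX : X → X → Prop) (α : X → A) :
    A ⊕ X → A ⊕ X → Prop
  | Sum.inl a, Sum.inl a' => RA a a'
  | Sum.inr x, Sum.inr x' => RX x x'
  | Sum.inl a, Sum.inr x => ∃ x', RX x x' ∧ α x' = a
  | Sum.inr x, Sum.inl a => ∃ x', RX x x' ∧ α x' = a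

/-- The canonical retraction of the mapping cylinder onto `A`. -/
def cylRetr {A X : Type*} (α : X → A) : A ⊕ X → A :=
  Sum.elim id α

/-- the mapping cylinder of a graph homomorphism `α : X → A` into a finite
connected reflexive graph `A` is a finite connected (reflexive, symmetric) graph, and the
canonical retraction `r_α : C_α → A` is a connected epimorphism. -/
theorem mappingCylinder_connected_and_retraction_connEpi
    {A X : Type*} [Fintype A] [Fintype X]
    (RA : A → A → Prop) (RX : X → X → Prop)
    (hreflA : ∀ a, RA a a) (hsymmA : ∀ a a', RA a a' → RA a' a)
    (hreflX : ∀ x, RX x x) (hsymmX : ∀ x x', RX x x' → RX x' x)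
    (hconnA : FinConn RA Set.univ)
    (α : X → A) (hα : ∀ x x', RX x x' → RA (α x) (α x')) :
    (∀ v, cylR RA RX α v v) ∧
    (∀ v w, cylR RA RX α v w → cylR RA RX α w v) ∧
    FinConn (cylR RA RX α) Set.univ ∧
    IsConnEpi (cylR RA RX α) RA (cylRetr α) := by

  have hpre : ∀ S : Set A, FinConn RA S → FinConn (cylR RA RX α) (cylRetr α ⁻¹' S) := by
    intro S hS U₁ U₂ hU₁ hU₂ hne₁ hne₂ hunion
    by_cases hc : (∃ x, Sum.inr x ∈ U₁ ∧ Sum.inl (α x) ∈ U₂) ∨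
        (∃ x, Sum.inr x ∈ U₂ ∧ Sum.inl (α x) ∈ U₁)
    · rcases hc with ⟨x, h1, h2⟩ | ⟨x, h1, h2⟩
      · exact ⟨_, h1, _, h2, ⟨x, hreflX x, rfl⟩⟩
      · exact ⟨_, h2, _, h1, ⟨x, hreflX x, rfl⟩⟩
    push_neg at hc
    obtain ⟨hc1, hc2⟩ := hc
    have hmem1 : ∀ x : X, Sum.inr x ∈ U₁ → Sum.inl (α x) ∈ U₁ := by
      intro x hx
      have hS' : α x ∈ S := hU₁ hx
      have : Sum.inl (α x) ∈ U₁ ∪ U₂ := by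
        rw [← hunion]; exact hS'
      rcases this with h | h
      · exact h
      · exact absurd h (hc1 x hx)
    have hmem2 : ∀ x : X, Sum.inr x ∈ U₂ → Sum.inl (α x) ∈ U₂ := by
      intro x hx
      have hS' : α x ∈ S := hU₂ hx
      have : Sum.inl (α x) ∈ U₁ ∪ U₂ := by
        rw [← hunion]; exact hS'
      rcases this with h | h
      · exact absurd h (hc2 x hx)
      · exact h
    set V₁ : Set A := {a | Sum.inl a ∈ U₁} with hV₁
    set V₂ : Set A := {a | Sum.inl a ∈ U₂} with hV₂
    have hVS₁ : V₁ ⊆ S := fun a ha => hU₁ ha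
    have hVS₂ : V₂ ⊆ S := fun a ha => hU₂ ha
    have hVne₁ : V₁.Nonempty := by
      obtain ⟨u, hu⟩ := hne₁
      rcases u with a | x
      · exact ⟨a, hu⟩
      · exact ⟨α x, hmem1 x hu⟩
    have hVne₂ : V₂.Nonempty := by
      obtain ⟨u, hu⟩ := hne₂
      rcases u with a | x
      · exact ⟨a, hu⟩
      · exact ⟨α x, hmem2 x hu⟩
    have hVcup : S = V₁ ∪ V₂ := by
      apply Set.Subset.antisymm
      · intro a ha
        have : Sum.inl a ∈ U₁ ∪ U₂ := by rw [← hunion]; exact ha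
        exact this
      · exact Set.union_subset hVS₁ hVS₂
    obtain ⟨a₁, ha₁, a₂, ha₂, hR⟩ := hS V₁ V₂ hVS₁ hVS₂ hVne₁ hVne₂ hVcup
    exact ⟨Sum.inl a₁, ha₁, Sum.inl a₂, ha₂, hR⟩
  refine ⟨?_, ?_, ?_, ⟨⟨?_, ?_, ?_⟩, hpre⟩⟩
  · rintro (a | x)
    · exact hreflA a
    · exact hreflX x
  · rintro (a | x) (a' | x') h
    · exact hsymmA _ _ h
    · exact h
    · exact h
    · exact hsymmX _ _ h
  · have := hpre Set.univ hconnA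
    simpa using this
  · rintro (a | x) (a' | x') h
    · exact h
    · obtain ⟨x'', hx, rfl⟩ := h
      exact hsymmA _ _ (hα _ _ hx)
    · obtain ⟨x'', hx, rfl⟩ := h
      exact hα _ _ hx
    · exact hα _ _ h
  · exact fun a => ⟨Sum.inl a, rfl⟩
  · intro a a' h
    exact ⟨Sum.inl a, Sum.inl a', h, rfl, rfl⟩
end

section
/- Let g : B → A be a connected epimorphism between finite connected graphs, and let β : X → B and α : X → A be graph homomorphisms from a finite graph X with g ∘ β = α. Then the map g* : C_β → C_α defined by g* = g on dom(B) and g* = id on dom(X) is a connected epimorphism between the mapping cylinders, and it satisfies r_α ∘ g* = g ∘ r_β, where r_β and r_α are the canonical retractions. -/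
/-- given a connected epimorphism `g : B → A` between finite connected
graphs and homomorphisms `β : X → B`, `α : X → A` with `g ∘ β = α`, the induced map
`g* : C_β → C_α` (equal to `g` on `B` and the identity on `X`) is a connected
epimorphism of mapping cylinders satisfying `r_α ∘ g* = g ∘ r_β`. -/
theorem mappingCylinder_induced_map_connEpi
    {A B X : Type*} [Fintype A] [Fintype B] [Fintype X]
    (RA : A → A → Prop) (RB : B → B → Prop) (RX : X → X → Prop)
    (hreflA : ∀ a, RA a a) (hsymmA : ∀ a a', RA a a' → RA a' a)
    (hreflB : ∀ b, RB b b) (hsymmB : ∀ b b', RB b b' → RB b' b)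
    (hreflX : ∀ x, RX x x) (hsymmX : ∀ x x', RX x x' → RX x' x)
    (hconnA : FinConn RA Set.univ) (hconnB : FinConn RB Set.univ)
    (g : B → A) (hg : IsConnEpi RB RA g)
    (β : X → B) (hβ : ∀ x x', RX x x' → RB (β x) (β x'))
    (α : X → A) (hα : ∀ x x', RX x x' → RA (α x) (α x'))
    (hcomm : g ∘ β = α) :
    IsConnEpi (cylR RB RX β) (cylR RA RX α) (Sum.map g id) ∧
    cylRetr α ∘ Sum.map g id = g ∘ cylRetr β := by
  obtain ⟨⟨hhom, hsurj, hedge⟩, hconn⟩ := hg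
  have hgβ : ∀ x, g (β x) = α x := fun x => congrFun hcomm x
  refine ⟨⟨⟨?_, ?_, ?_⟩, ?_⟩, ?_⟩
  · -- homomorphism
    rintro (b | x) (b' | x') h
    · exact hhom _ _ h
    · obtain ⟨x'', hx'', hb⟩ := h
      exact ⟨x'', hx'', by rw [← hb, hgβ]⟩
    · obtain ⟨x'', hx'', hb⟩ := h
      exact ⟨x'', hx'', by rw [← hb, hgβ]⟩
    · exact h
  · -- surjective on vertices
    rintro (a | x)
    · obtain ⟨b, rfl⟩ := hsurj a
      exact ⟨Sum.inl b, rfl⟩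
    · exact ⟨Sum.inr x, rfl⟩
  · -- surjective on edges
    rintro (a | x) (a' | x') h
    · obtain ⟨b, b', hbb', rfl, rfl⟩ := hedge _ _ h
      exact ⟨Sum.inl b, Sum.inl b', hbb', rfl, rfl⟩
    · obtain ⟨x'', hx'', hax''⟩ := h
      exact ⟨Sum.inl (β x''), Sum.inr x', ⟨x'', hx'', rfl⟩,
        by simp [hgβ, hax''], rfl⟩
    · obtain ⟨x'', hx'', hax''⟩ := h
      exact ⟨Sum.inr x, Sum.inl (β x''), ⟨x'', hx'', rfl⟩, rfl,
        by simp [hgβ, hax'']⟩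
    · exact ⟨Sum.inr x, Sum.inr x', h, rfl, rfl⟩
  · -- connectedness of preimages
    intro S hS U₁ U₂ hU₁ hU₂ hne₁ hne₂ hcover
    set f : B ⊕ X → A ⊕ X := Sum.map g id with hf
    -- auxiliary: lifting an edge in A through a connected preimage
    have pairConn : ∀ a a' : A, RA a a' → FinConn RA {a, a'} := by
      intro a a' h
      rintro V₁ V₂ hV₁ hV₂ ⟨y₁, hy₁⟩ ⟨y₂, hy₂⟩ -
      refine ⟨y₁, hy₁, y₂, hy₂, ?_⟩
      have h1 := hV₁ hy₁; have h2 := hV₂ hy₂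
      simp only [Set.mem_insert_iff, Set.mem_singleton_iff] at h1 h2
      rcases h1 with rfl | rfl <;> rcases h2 with rfl | rfl
      · exact hreflA _
      · exact h
      · exact hsymmA _ _ h
      · exact hreflA _
    have liftPair : ∀ (a a' : A), RA a a' → ∀ (T₁ T₂ : Set B),
        g ⁻¹' {a, a'} ⊆ T₁ ∪ T₂ → ∀ b₁ ∈ T₁, g b₁ = a → ∀ b₂ ∈ T₂, g b₂ = a' →
        ∃ c₁ ∈ T₁, ∃ c₂ ∈ T₂, RB c₁ c₂ := by
      intro a a' h T₁ T₂ hcov b₁ hb₁ hgb₁ b₂ hb₂ hgb₂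
      have hc := hconn {a, a'} (pairConn a a' h)
      have hmem₁ : b₁ ∈ g ⁻¹' {a, a'} := by simp [hgb₁]
      have hmem₂ : b₂ ∈ g ⁻¹' {a, a'} := by simp [hgb₂]
      obtain ⟨c₁, ⟨-, hc₁⟩, c₂, ⟨-, hc₂⟩, hRB⟩ :=
        hc (g ⁻¹' {a, a'} ∩ T₁) (g ⁻¹' {a, a'} ∩ T₂)
          Set.inter_subset_left Set.inter_subset_left
          ⟨b₁, hmem₁, hb₁⟩ ⟨b₂, hmem₂, hb₂⟩
          (by
            ext b
            constructor
            · intro hb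
              rcases hcov hb with hb' | hb'
              · exact Or.inl ⟨hb, hb'⟩
              · exact Or.inr ⟨hb, hb'⟩
            · rintro (⟨hb, -⟩ | ⟨hb, -⟩) <;> exact hb)
      exact ⟨c₁, hc₁, c₂, hc₂, hRB⟩
    -- image partition of S
    have hWsub₁ : f '' U₁ ⊆ S := by
      rintro - ⟨u, hu, rfl⟩; exact hU₁ hu
    have hWsub₂ : f '' U₂ ⊆ S := by
      rintro - ⟨u, hu, rfl⟩; exact hU₂ hu
    have hScover : S = f '' U₁ ∪ f '' U₂ := by
      apply Set.Subset.antisymm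
      · intro s hs
        obtain ⟨u, rfl⟩ : ∃ u, f u = s := by
          rcases s with a | x
          · obtain ⟨b, rfl⟩ := hsurj a; exact ⟨Sum.inl b, rfl⟩
          · exact ⟨Sum.inr x, rfl⟩
        have : u ∈ U₁ ∪ U₂ := by rw [← hcover]; exact hs
        rcases this with hu | hu
        · exact Or.inl ⟨u, hu, rfl⟩
        · exact Or.inr ⟨u, hu, rfl⟩
      · exact Set.union_subset hWsub₁ hWsub₂
    obtain ⟨p, hp, q, hq, hpq⟩ := hS (f '' U₁) (f '' U₂) hWsub₁ hWsub₂
      (hne₁.image f) (hne₂.image f) hScover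
    obtain ⟨v₁, hv₁, rfl⟩ := hp
    obtain ⟨v₂, hv₂, rfl⟩ := hq
    have hpre : ∀ u : B ⊕ X, f u ∈ S → u ∈ U₁ ∪ U₂ := by
      intro u hu; rw [← hcover]; exact hu
    rcases v₁ with b₁ | x₁ <;> rcases v₂ with b₂ | x₂
    · -- both in B
      have hRA : RA (g b₁) (g b₂) := hpq
      have hcov : g ⁻¹' {g b₁, g b₂} ⊆ {b | Sum.inl b ∈ U₁} ∪ {b | Sum.inl b ∈ U₂} := by
        intro b hb
        have hbS : f (Sum.inl b) ∈ S := by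
          simp only [Set.mem_preimage, Set.mem_insert_iff, Set.mem_singleton_iff] at hb
          rcases hb with hb | hb
          · show Sum.inl (g b) ∈ S; rw [hb]; exact hWsub₁ ⟨_, hv₁, rfl⟩
          · show Sum.inl (g b) ∈ S; rw [hb]; exact hWsub₂ ⟨_, hv₂, rfl⟩
        exact hpre _ hbS
      obtain ⟨c₁, hc₁, c₂, hc₂, hRB⟩ := liftPair _ _ hRA _ _ hcov b₁ hv₁ rfl b₂ hv₂ rfl
      exact ⟨Sum.inl c₁, hc₁, Sum.inl c₂, hc₂, hRB⟩
    · -- B then X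
      obtain ⟨x', hxx', hax'⟩ : ∃ x', RX x₂ x' ∧ α x' = g b₁ := hpq
      have hβS : f (Sum.inl (β x')) ∈ S := by
        show Sum.inl (g (β x')) ∈ S
        rw [hgβ, hax']; exact hWsub₁ ⟨_, hv₁, rfl⟩
      rcases hpre _ hβS with hmem | hmem
      · -- β x' side in U₁ : direct edge to inr x₂ ∈ U₂
        exact ⟨Sum.inl (β x'), hmem, Sum.inr x₂, hv₂, ⟨x', hxx', rfl⟩⟩
      · -- β x' side in U₂ : use liftPair on singleton
        have hcov : g ⁻¹' {g b₁, g b₁} ⊆ {b | Sum.inl b ∈ U₁} ∪ {b | Sum.inl b ∈ U₂} := by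
          intro b hb
          have hbS : f (Sum.inl b) ∈ S := by
            simp only [Set.mem_preimage, Set.mem_insert_iff, Set.mem_singleton_iff,
              or_self] at hb
            show Sum.inl (g b) ∈ S; rw [hb]; exact hWsub₁ ⟨_, hv₁, rfl⟩
          exact hpre _ hbS
        obtain ⟨c₁, hc₁, c₂, hc₂, hRB⟩ := liftPair _ _ (hreflA (g b₁)) _ _ hcov
          b₁ hv₁ rfl (β x') hmem (by rw [hgβ, hax'])
        exact ⟨Sum.inl c₁, hc₁, Sum.inl c₂, hc₂, hRB⟩
    · -- X then B
      obtain ⟨x', hxx', hax'⟩ : ∃ x', RX x₁ x' ∧ α x' = g b₂ := hpq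
      have hβS : f (Sum.inl (β x')) ∈ S := by
        show Sum.inl (g (β x')) ∈ S
        rw [hgβ, hax']; exact hWsub₂ ⟨_, hv₂, rfl⟩
      rcases hpre _ hβS with hmem | hmem
      · -- β x' side in U₁ : use liftPair on singleton
        have hcov : g ⁻¹' {g b₂, g b₂} ⊆ {b | Sum.inl b ∈ U₁} ∪ {b | Sum.inl b ∈ U₂} := by
          intro b hb
          have hbS : f (Sum.inl b) ∈ S := by
            simp only [Set.mem_preimage, Set.mem_insert_iff, Set.mem_singleton_iff,
              or_self] at hb
            show Sum.inl (g b) ∈ S; rw [hb]; exact hWsub₂ ⟨_, hv₂, rfl⟩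
          exact hpre _ hbS
        obtain ⟨c₁, hc₁, c₂, hc₂, hRB⟩ := liftPair _ _ (hreflA (g b₂)) _ _ hcov
          (β x') hmem (by rw [hgβ, hax']) b₂ hv₂ rfl
        exact ⟨Sum.inl c₁, hc₁, Sum.inl c₂, hc₂, hRB⟩
      · -- β x' side in U₂ : direct edge from inr x₁ ∈ U₁
        exact ⟨Sum.inr x₁, hv₁, Sum.inl (β x'), hmem, ⟨x', hxx', rfl⟩⟩
    · -- both in X
      exact ⟨Sum.inr x₁, hv₁, Sum.inr x₂, hv₂, hpq⟩
  · -- retraction identity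
    funext u
    rcases u with a | x
    · rfl
    · exact (hgβ x).symm
end
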